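/- Let d ≥ 1 and let x₁, y₀ ∈ ℝ^d with x₁ ≠ y₀. Set u₊ = (y₀ − x₁)/|y₀ − x₁| and u₋ = −u₊, and for a unit vector u and δ, α > 0 define the cone C(x₁, u, δ, α) = {z ∈ ℝ^d : u · (z − x₁) ≥ (1 − δ)|z − x₁|} ∩ {z : |z − x₁| ≤ α}, and set C₋ = C(x₁, u₋, δ, α) \ {x₁} and C₊ = C(x₁, u₊, δ, α) \ {x₁}. Then for every r′ with 0 < r′ < |x₁ − y₀| there exist δ₀ > 0 and α₀ > 0 such that for all 0 < δ ≤ δ₀ and 0 < α ≤ α₀, and for all z₋ ∈ C₋, z₊ ∈ C₊ and all ỹ with |ỹ − y₀| < r′, one has |z₊ − ỹ| < |z₋ − ỹ|. -/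

import Mathlib

open MeasureTheory Filter Set

noncomputable section

/-- Euclidean space `ℝ^d`. -/
abbrev Eucl (d : ℕ) := EuclideanSpace ℝ (Fin d)

/-- The half-open unit cube `[0,1)^d`. -/
def unitCube (d : ℕ) : Set (Eucl d) := {x | ∀ i, x i ∈ Set.Ico (0 : ℝ) 1}

/-- `μ` does not charge small sets: it gives no mass to `(d-1)`-rectifiable sets,
i.e. `μ (f '' ℝ^(d-1)) = 0` for every Lipschitz map `f : ℝ^(d-1) → ℝ^d`. -/
def DoesNotChargeSmallSets (d : ℕ) (μ : Measure (Eucl d)) : Prop :=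
  ∀ (f : Eucl (d - 1) → Eucl d) (K : NNReal), LipschitzWith K f → μ (Set.range f) = 0

/-- The cone `C(x₁, u, δ, α)` with apex `x₁`, direction `u`, opening `δ`, radius `α`. -/
def cone {d : ℕ} (x₁ u : Eucl d) (δ α : ℝ) : Set (Eucl d) :=
  {z | (1 - δ) * ‖z - x₁‖ ≤ (inner ℝ u (z - x₁) : ℝ) ∧ ‖z - x₁‖ ≤ α}

lemma aux_inner {d : ℕ} (u p w : Eucl d) (hu : ‖u‖ = 1) {δ : ℝ} (hδ0 : 0 ≤ δ) (hδ1 : δ ≤ 1)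
    (h : (1 - δ) * ‖p‖ ≤ (inner ℝ u p : ℝ)) :
    (inner ℝ u p : ℝ) * (inner ℝ u w : ℝ) - Real.sqrt (2*δ) * (‖p‖ * ‖w‖) ≤ (inner ℝ p w : ℝ) := by
  set c : ℝ := inner ℝ u p with hc
  set q : Eucl d := p - c • u with hqdef
  have hqw : (inner ℝ q w : ℝ) = inner ℝ p w - c * inner ℝ u w := by
    rw [hqdef, inner_sub_left, real_inner_smul_left]
  have hcp : (inner ℝ p u : ℝ) = c := by rw [real_inner_comm]
  have hqn : ‖q‖^2 = ‖p‖^2 - c^2 := by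
    rw [hqdef, norm_sub_sq_real, real_inner_smul_right, hcp, norm_smul]
    simp [hu]
    ring
  have hc0 : 0 ≤ (1-δ) * ‖p‖ := mul_nonneg (by linarith) (norm_nonneg _)
  have hc2 : (1-δ)^2 * ‖p‖^2 ≤ c^2 := by nlinarith
  have hq2 : ‖q‖^2 ≤ 2*δ * ‖p‖^2 := by nlinarith [sq_nonneg (δ * ‖p‖)]
  have hqle : ‖q‖ ≤ Real.sqrt (2*δ) * ‖p‖ := by
    have h1 : Real.sqrt (‖q‖^2) ≤ Real.sqrt (2*δ * ‖p‖^2) := Real.sqrt_le_sqrt hq2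
    rwa [Real.sqrt_sq (norm_nonneg _), Real.sqrt_mul (by positivity), Real.sqrt_sq (norm_nonneg _)] at h1
  have habs : |(inner ℝ q w : ℝ)| ≤ ‖q‖ * ‖w‖ := abs_real_inner_le_norm q w
  have h2 : -(Real.sqrt (2*δ) * (‖p‖ * ‖w‖)) ≤ (inner ℝ q w : ℝ) := by
    have := neg_abs_le (inner ℝ q w : ℝ)
    nlinarith [norm_nonneg w, mul_le_mul_of_nonneg_right hqle (norm_nonneg w)]
  linarith [hqw ▸ h2]

lemma key_ineq (A B W t cp cq ip iq s e δ : ℝ)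
    (hA0 : 0 < A) (hB0 : 0 < B)
    (bound1 : cp * t - s * (A * W) ≤ ip)
    (bound2 : iq ≤ cq * t + s * (B * W))
    (h1 : (1 - δ) * A * t ≤ cp * t)
    (h2 : (1 - δ) * B * t ≤ (-cq) * t)
    (h4 : A^2 - B^2 < e/2 * (A + B))
    (h5 : e * (A + B) < 2*(1-δ) * t * (A + B))
    (h6 : s * (A * W) + s * (B * W) ≤ e/4 * (A + B)) :
    A^2 - 2*ip + W^2 < B^2 - 2*iq + W^2 := by
  nlinarith [bound1, bound2, h1, h2, h4, h5, h6]

set_option maxHeartbeats 1000000 in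
/-- **Cone inequality.** For small enough `δ, α > 0`, every point of the cone towards
`y₀` (apex removed) is strictly closer to every `ty ∈ B_{r'}(y₀)` than every point of the
opposite cone (apex removed). -/
theorem cone_inequality
    {d : ℕ} (hd : 1 ≤ d) (x₁ y₀ : Eucl d) (hne : x₁ ≠ y₀)
    (r' : ℝ) (hr0 : 0 < r') (hr : r' < ‖x₁ - y₀‖) :
    ∃ δ₀ > (0 : ℝ), ∃ α₀ > (0 : ℝ), ∀ δ α : ℝ,
      0 < δ → δ ≤ δ₀ → 0 < α → α ≤ α₀ →
      ∀ zm ∈ cone x₁ (-(‖y₀ - x₁‖⁻¹ • (y₀ - x₁))) δ α \ {x₁},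
      ∀ zp ∈ cone x₁ (‖y₀ - x₁‖⁻¹ • (y₀ - x₁)) δ α \ {x₁},
      ∀ ty : Eucl d, ‖ty - y₀‖ < r' → ‖zp - ty‖ < ‖zm - ty‖ := by
  have hyx : y₀ - x₁ ≠ 0 := sub_ne_zero.mpr hne.symm
  set R : ℝ := ‖y₀ - x₁‖ with hRdef
  have hR0 : 0 < R := norm_pos_iff.mpr hyx
  have hRx : ‖x₁ - y₀‖ = R := norm_sub_rev x₁ y₀
  rw [hRx] at hr
  set u : Eucl d := ‖y₀ - x₁‖⁻¹ • (y₀ - x₁) with hudef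
  have hu : ‖u‖ = 1 := norm_smul_inv_norm hyx
  have huy : (inner ℝ u (y₀ - x₁) : ℝ) = R := by
    rw [hudef, real_inner_smul_left, real_inner_self_eq_norm_sq]
    field_simp
    ring
  set ε : ℝ := R - r' with hεdef
  have hε : 0 < ε := by simp [hεdef]; linarith
  refine ⟨min (1/2) (ε^2/(128*R^2)), by positivity, ε/2, by positivity, ?_⟩
  intro δ α hδ hδ₀ hα hα₀ zm hzm zp hzp ty hty
  obtain ⟨⟨hm1, hm2⟩, hm3⟩ := hzm
  obtain ⟨⟨hp1, hp2⟩, hp3⟩ := hzp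
  have hδh : δ ≤ 1/2 := le_trans hδ₀ (min_le_left _ _)
  have hδR : δ ≤ ε^2/(128*R^2) := le_trans hδ₀ (min_le_right _ _)
  have hδ1 : δ ≤ 1 := by linarith
  -- abbreviations
  set p : Eucl d := zp - x₁ with hpdef
  set q : Eucl d := zm - x₁ with hqdef
  set w : Eucl d := ty - x₁ with hwdef
  have hA0 : 0 < ‖p‖ := norm_pos_iff.mpr (sub_ne_zero.mpr (by simpa using hp3))
  have hB0 : 0 < ‖q‖ := norm_pos_iff.mpr (sub_ne_zero.mpr (by simpa using hm3))
  set s : ℝ := Real.sqrt (2*δ) with hsdef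
  have hs0 : 0 ≤ s := Real.sqrt_nonneg _
  have hs : s ≤ ε/(8*R) := by
    have h2δ : 2*δ ≤ (ε/(8*R))^2 := by
      rw [div_pow, le_div_iff₀ (by positivity)]
      rw [le_div_iff₀ (by positivity)] at hδR
      nlinarith
    have := Real.sqrt_le_sqrt h2δ
    rwa [Real.sqrt_sq (by positivity)] at this
  -- inner product bounds from the cone conditions
  have bound1 : (inner ℝ u p : ℝ) * (inner ℝ u w : ℝ) - s * (‖p‖ * ‖w‖) ≤ (inner ℝ p w : ℝ) :=
    aux_inner u p w hu hδ.le hδ1 hp1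
  have raw2 := aux_inner (-u) q (-w) (by simpa using hu) hδ.le hδ1 hm1
  simp only [inner_neg_left, inner_neg_right, inner_neg_neg, norm_neg, neg_neg] at raw2
  have bound2 : (inner ℝ q w : ℝ) ≤ (inner ℝ u q : ℝ) * (inner ℝ u w : ℝ) + s * (‖q‖ * ‖w‖) := by
    nlinarith [raw2]
  have hm1' : (1 - δ) * ‖q‖ ≤ -(inner ℝ u q : ℝ) := by
    have := hm1
    rwa [inner_neg_left] at this
  -- geometry of w
  have hwsplit : w = (ty - y₀) + (y₀ - x₁) := by rw [hwdef]; abel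
  have htw : ε < (inner ℝ u w : ℝ) := by
    have h1 : (inner ℝ u w : ℝ) = inner ℝ u (ty - y₀) + R := by
      rw [hwsplit, inner_add_right, huy]
    have h2 : |(inner ℝ u (ty - y₀) : ℝ)| ≤ ‖u‖ * ‖ty - y₀‖ := abs_real_inner_le_norm _ _
    rw [hu, one_mul] at h2
    have := neg_abs_le (inner ℝ u (ty - y₀) : ℝ)
    rw [h1]
    simp only [hεdef]
    linarith
  have hW : ‖w‖ < 2*R := by
    calc ‖w‖ = ‖(ty - y₀) + (y₀ - x₁)‖ := by rw [hwsplit]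
    _ ≤ ‖ty - y₀‖ + ‖y₀ - x₁‖ := norm_add_le _ _
    _ < 2*R := by simp only [← hRdef]; linarith
  have htw0 : (0:ℝ) ≤ (inner ℝ u w : ℝ) := le_of_lt (lt_of_lt_of_le hε htw.le)
  -- scalar bookkeeping
  have h1 : (1-δ) * ‖p‖ * (inner ℝ u w : ℝ) ≤ (inner ℝ u p : ℝ) * (inner ℝ u w : ℝ) :=
    mul_le_mul_of_nonneg_right hp1 htw0
  have h2 : (1-δ) * ‖q‖ * (inner ℝ u w : ℝ) ≤ (-(inner ℝ u q : ℝ)) * (inner ℝ u w : ℝ) :=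
    mul_le_mul_of_nonneg_right hm1' htw0
  have h3 : s * ‖w‖ ≤ ε/4 := by
    have hWn : (0:ℝ) ≤ ‖w‖ := norm_nonneg _
    have hmm : s * ‖w‖ ≤ ε/(8*R) * (2*R) := mul_le_mul hs hW.le hWn (by positivity)
    have heq : ε/(8*R) * (2*R) = ε/4 := by field_simp; ring
    linarith
  have h6 : s * (‖p‖ * ‖w‖) + s * (‖q‖ * ‖w‖) ≤ (ε/4) * (‖p‖ + ‖q‖) := by
    nlinarith [hA0.le, hB0.le]
  have h4 : ‖p‖^2 - ‖q‖^2 < (ε/2) * (‖p‖ + ‖q‖) := by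
    nlinarith
  have h5' : ε < 2*(1-δ) * (inner ℝ u w : ℝ) := by
    nlinarith [mul_nonneg (by linarith : (0:ℝ) ≤ 1 - 2*δ) htw0]
  have h5 : ε * (‖p‖ + ‖q‖) < 2*(1-δ) * (inner ℝ u w : ℝ) * (‖p‖ + ‖q‖) :=
    mul_lt_mul_of_pos_right h5' (add_pos hA0 hB0)
  -- norm expansions
  have e1 : ‖zp - ty‖^2 = ‖p‖^2 - 2*(inner ℝ p w : ℝ) + ‖w‖^2 := by
    rw [show zp - ty = p - w by rw [hpdef, hwdef]; abel, norm_sub_sq_real]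
  have e2 : ‖zm - ty‖^2 = ‖q‖^2 - 2*(inner ℝ q w : ℝ) + ‖w‖^2 := by
    rw [show zm - ty = q - w by rw [hqdef, hwdef]; abel, norm_sub_sq_real]
  have hfin : ‖zp - ty‖^2 < ‖zm - ty‖^2 := by
    rw [e1, e2]
    exact key_ineq ‖p‖ ‖q‖ ‖w‖ (inner ℝ u w) (inner ℝ u p) (inner ℝ u q) (inner ℝ p w) (inner ℝ q w)
      s ε δ hA0 hB0 bound1 bound2 h1 h2 h4 h5 h6
  exact lt_of_pow_lt_pow_left₀ 2 (norm_nonneg _) hfin
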